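/- Damped pendulum: every solution of y'' + y' − 2 sin y = 0 that is bounded on (−∞, ∞) has limits at both ±∞, and each limit is an integer multiple of π. -/

import Mathlib

open Real Set Filter

lemma lipOfDeriv {f f' : ℝ → ℝ} {C : ℝ} (hf : ∀ x, HasDerivAt f (f' x) x)
    (hb : ∀ x, |f' x| ≤ C) : ∀ a b : ℝ, |f b - f a| ≤ C * |b - a| := by
  intro a b
  have := convex_univ.norm_image_sub_le_of_norm_hasDerivWithin_le
    (f := f) (f' := f') (fun x _ => (hf x).hasDerivWithinAt)
    (fun x _ => by simpa [Real.norm_eq_abs] using hb x) (mem_univ a) (mem_univ b)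
  simpa [Real.norm_eq_abs] using this

lemma ftcHelper {f f' : ℝ → ℝ} (hf : ∀ x, HasDerivAt f (f' x) x) (hc : Continuous f')
    (s t : ℝ) : f t - f s = ∫ u in s..t, f' u :=
  (intervalIntegral.integral_eq_sub_of_hasDerivAt (fun u _ => hf u)
    (hc.intervalIntegrable s t)).symm


lemma sinsmall (f g : ℝ → ℝ) (c : ℝ) (hc : |c| ≤ 1)
    (hfc : Continuous f) (hgc : Continuous g)
    (hlip : ∀ a b : ℝ, |f b - f a| ≤ 2 * |b - a|)
    (hftc : ∀ s t : ℝ, s ≤ t → g t - g s = ∫ u in s..t, (c * g u + 2 * f u))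
    (hg0 : Tendsto g atTop (nhds 0)) :
    Tendsto f atTop (nhds 0) := by
  rw [Metric.tendsto_atTop]
  intro ε hε
  set ε' := min ε 1 with hε'def
  have hε'pos : 0 < ε' := lt_min hε one_pos
  have hε'le1 : ε' ≤ 1 := min_le_right _ _
  obtain ⟨T, hT⟩ := Metric.tendsto_atTop.1 hg0 (ε' ^ 2 / 64) (by positivity)
  refine ⟨T, fun t ht => ?_⟩
  rw [Real.dist_eq, sub_zero]
  by_contra hcon
  push_neg at hcon
  have hft : ε' ≤ |f t| := le_trans (min_le_left _ _) hcon
  set δ := ε' / 4 with hδdef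
  have hδpos : 0 < δ := by positivity
  have hgs : ∀ u, t ≤ u → |g u| < ε' ^ 2 / 64 := by
    intro u hu
    have := hT u (le_trans ht hu)
    rwa [Real.dist_eq, sub_zero] at this
  set σ : ℝ := if 0 ≤ f t then 1 else -1 with hσdef
  have hσabs : |σ| = 1 := by
    rw [hσdef]; split <;> simp
  have hσf : ε' ≤ σ * f t := by
    rw [hσdef]; split
    · next h => rwa [one_mul, ← abs_of_nonneg h]
    · next h => rw [neg_one_mul, ← abs_of_neg (lt_of_not_ge h)]; exact hft
  have hptwise : ∀ u ∈ Icc t (t + δ), ε' / 2 ≤ σ * (c * g u + 2 * f u) := by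
    intro u hu
    have h1 : |f u - f t| ≤ 2 * δ := by
      have := hlip t u
      have h2 : |u - t| ≤ δ := by
        rw [abs_of_nonneg (by linarith [hu.1])]; linarith [hu.2]
      linarith
    have h2 : -(2 * δ) ≤ σ * (f u - f t) := by
      have := neg_abs_le (σ * (f u - f t))
      rw [abs_mul, hσabs, one_mul] at this
      linarith
    have h3 : -(ε' ^ 2 / 64) ≤ σ * (c * g u) := by
      have h4 := neg_abs_le (σ * (c * g u))
      have h5 : |σ * (c * g u)| ≤ |g u| := by
        rw [abs_mul, hσabs, one_mul, abs_mul]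
        nlinarith [abs_nonneg (g u), abs_nonneg c]
      have h6 := (hgs u hu.1).le
      linarith
    have hsq : ε' ^ 2 ≤ ε' := by nlinarith
    have : σ * (c * g u + 2 * f u) = σ * (c * g u) + 2 * (σ * f t) + 2 * (σ * (f u - f t)) := by
      ring
    rw [this]
    linarith
  have hptc : Continuous fun u => σ * (c * g u + 2 * f u) :=
    continuous_const.mul ((continuous_const.mul hgc).add (continuous_const.mul hfc))
  have hint : δ * (ε' / 2) ≤ σ * (g (t + δ) - g t) := by
    have h1 := hftc t (t + δ) (by linarith)
    have h2 : σ * (g (t + δ) - g t) = ∫ u in t..(t + δ), σ * (c * g u + 2 * f u) := by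
      rw [h1, ← intervalIntegral.integral_const_mul]
    have h3 : (∫ _ in t..(t + δ), (ε' / 2 : ℝ)) ≤ ∫ u in t..(t + δ), σ * (c * g u + 2 * f u) := by
      apply intervalIntegral.integral_mono_on (by linarith)
        (intervalIntegrable_const) (hptc.intervalIntegrable _ _) hptwise
    rw [intervalIntegral.integral_const, smul_eq_mul] at h3
    rw [h2]
    calc δ * (ε' / 2) = (t + δ - t) * (ε' / 2) := by ring
    _ ≤ _ := h3
  have hup : σ * (g (t + δ) - g t) < 2 * (ε' ^ 2 / 64) := by
    have h1 := hgs t le_rfl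
    have h2 := hgs (t + δ) (by linarith)
    have h3 : |σ * (g (t + δ) - g t)| ≤ |g (t + δ)| + |g t| := by
      rw [abs_mul, hσabs, one_mul]
      exact abs_sub (g (t + δ)) (g t)
    have h4 := le_abs_self (σ * (g (t + δ) - g t))
    linarith
  nlinarith


lemma zsmall (z H : ℝ → ℝ) (l : Filter ℝ) [l.NeBot]
    (hzc : Continuous z)
    (hl : ∀ δ : ℝ, 0 < δ → Tendsto (fun t => H t - H (t + δ)) l (nhds 0))
    (hint : ∀ s t : ℝ, s ≤ t → H s - H t = ∫ u in s..t, (z u) ^ 2)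
    (hlip : ∀ a b : ℝ, |(z b) ^ 2 - (z a) ^ 2| ≤ 16 * |b - a|) :
    Tendsto z l (nhds 0) := by
  rw [Metric.tendsto_nhds]
  intro ε hε
  set ε' := min ε 2 with hε'def
  have hε'pos : 0 < ε' := lt_min hε two_pos
  set δ := ε' ^ 2 / 32 with hδdef
  have hδpos : 0 < δ := by positivity
  have hev := Metric.tendsto_nhds.1 (hl δ hδpos) (ε' ^ 4 / 128) (by positivity)
  filter_upwards [hev] with t hHt
  rw [Real.dist_eq, sub_zero] at hHt ⊢
  by_contra hcon
  push_neg at hcon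
  have h1 : ε' ≤ |z t| := le_trans (min_le_left _ _) hcon
  have hpt : ∀ u ∈ Icc t (t + δ), ε' ^ 2 - 16 * (u - t) ≤ (z u) ^ 2 := by
    intro u hu
    have h2 := hlip t u
    have h3 : |u - t| = u - t := abs_of_nonneg (by linarith [hu.1])
    have h4 : ε' ^ 2 ≤ (z t) ^ 2 := by
      have := sq_abs (z t)
      nlinarith [abs_nonneg (z t)]
    rw [h3] at h2
    linarith [neg_abs_le ((z u) ^ 2 - (z t) ^ 2)]
  have hlow : ε' ^ 2 * δ - 8 * δ ^ 2 ≤ H t - H (t + δ) := by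
    rw [hint t (t + δ) (by linarith)]
    have h2 : (∫ u in t..(t + δ), (ε' ^ 2 - 16 * (u - t))) ≤ ∫ u in t..(t + δ), (z u) ^ 2 := by
      apply intervalIntegral.integral_mono_on (by linarith)
        ((by continuity : Continuous fun u : ℝ => ε' ^ 2 - 16 * (u - t)).intervalIntegrable _ _)
        ((hzc.pow 2).intervalIntegrable _ _) hpt
    have h3 : (∫ u in t..(t + δ), (ε' ^ 2 - 16 * (u - t)))
        = ε' ^ 2 * δ - 8 * δ ^ 2 := by
      have : (∫ u in t..(t + δ), (ε' ^ 2 - 16 * (u - t)))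
          = ∫ u in t..(t + δ), ((ε' ^ 2 + 16 * t) - 16 * u) := by
        apply intervalIntegral.integral_congr
        intro u _
        ring
      rw [this, intervalIntegral.integral_sub (g := fun u => 16 * u) intervalIntegrable_const
        ((continuous_const.mul continuous_id').intervalIntegrable _ _),
        intervalIntegral.integral_const, intervalIntegral.integral_const_mul, integral_id,
        smul_eq_mul]
      ring
    linarith
  have : 3 * (ε' ^ 4 / 128) ≤ H t - H (t + δ) := by
    rw [hδdef] at hlow ⊢
    nlinarith
  have h6 := le_abs_self (H t - H (t + δ))
  nlinarith


lemma limMultiple (y : ℝ → ℝ) (hyc : Continuous y)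
    (hs : Tendsto (fun t => Real.sin (y t)) atTop (nhds 0)) :
    ∃ k : ℤ, Tendsto y atTop (nhds (k * π)) := by
  have hπ := Real.pi_pos
  obtain ⟨T₀, hT₀⟩ : ∃ T₀ : ℝ, ∀ t ≥ T₀, |Real.sin (y t)| < 1 := by
    obtain ⟨T, hT⟩ := Metric.tendsto_atTop.1 hs 1 one_pos
    exact ⟨T, fun t ht => by simpa [Real.dist_eq] using hT t ht⟩
  have hround : ∀ t : ℝ, |y t - (round (y t / π) : ℝ) * π| ≤ π / 2 := by
    intro t
    have h := abs_sub_round (y t / π)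
    have h2 : y t - (round (y t / π) : ℝ) * π = (y t / π - round (y t / π)) * π := by
      field_simp
    rw [h2, abs_mul, abs_of_pos hπ]
    nlinarith
  have hsinabs : ∀ t : ℝ, |Real.sin (y t)| = |Real.sin (y t - (round (y t / π) : ℝ) * π)| := by
    intro t
    have h : y t = (y t - (round (y t / π) : ℝ) * π) + (round (y t / π) : ℝ) * π := by ring
    nth_rewrite 1 [h]
    rw [Real.sin_add, Real.sin_int_mul_pi, mul_zero, add_zero, abs_mul,
      Real.abs_cos_int_mul_pi, mul_one]
  -- sin of half-integer multiples has |sin| = 1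
  have hhalf : ∀ k : ℤ, |Real.sin (((k : ℝ) + 1 / 2) * π)| = 1 := by
    intro k
    have : ((k : ℝ) + 1 / 2) * π = (k : ℝ) * π + π / 2 := by ring
    rw [this, Real.sin_add, Real.sin_int_mul_pi, Real.cos_pi_div_two, Real.sin_pi_div_two,
      mul_zero, zero_add, mul_one, Real.abs_cos_int_mul_pi]
  have hmid : ∀ t, T₀ ≤ t → |y t - (round (y t / π) : ℝ) * π| < π / 2 := by
    intro t ht
    rcases lt_or_eq_of_le (hround t) with h | h
    · exact h
    · exfalso
      set r := y t - (round (y t / π) : ℝ) * π with hr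
      have habs := hT₀ t ht
      rw [hsinabs t, ← hr] at habs
      rcases (abs_eq (by positivity : (0:ℝ) ≤ π / 2)).1 h with h1 | h1
      · rw [h1] at habs; simp [Real.sin_pi_div_two] at habs
      · rw [h1] at habs; simp [Real.sin_pi_div_two] at habs
  have hlt : ∀ a b : ℝ, T₀ ≤ a → T₀ ≤ b → ¬(round (y a / π) < round (y b / π)) := by
    intro a b ha hb hab
    set ka := round (y a / π) with hka
    set kb := round (y b / π) with hkb
    have h1 : y a < (ka : ℝ) * π + π / 2 := by
      have := (abs_lt.1 (hmid a ha)).2; linarith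
    have h2 : (kb : ℝ) * π - π / 2 < y b := by
      have := (abs_lt.1 (hmid b hb)).1; linarith
    have h3 : (ka : ℝ) + 1 ≤ (kb : ℝ) := by exact_mod_cast hab
    have hc1 : y a < ((ka : ℝ) + 1 / 2) * π := by linarith
    have hc2 : ((ka : ℝ) + 1 / 2) * π < y b := by nlinarith
    have hex : ∃ u, (T₀ ≤ u) ∧ y u = ((ka : ℝ) + 1 / 2) * π := by
      rcases le_total a b with hab2 | hab2
      · obtain ⟨u, hu, hyu⟩ := intermediate_value_Icc hab2 hyc.continuousOn
          ⟨hc1.le, hc2.le⟩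
        exact ⟨u, le_trans ha hu.1, hyu⟩
      · obtain ⟨u, hu, hyu⟩ := intermediate_value_Icc' hab2 hyc.continuousOn
          ⟨hc1.le, hc2.le⟩
        exact ⟨u, le_trans hb hu.1, hyu⟩
    obtain ⟨u, hu, hyu⟩ := hex
    have := hT₀ u hu
    rw [hyu, hhalf ka] at this
    exact lt_irrefl _ this
  have hkconst : ∀ t, T₀ ≤ t → round (y t / π) = round (y T₀ / π) :=
    fun t ht => le_antisymm (not_lt.1 (hlt T₀ t le_rfl ht)) (not_lt.1 (hlt t T₀ ht le_rfl))
  refine ⟨round (y T₀ / π), ?_⟩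
  rw [Metric.tendsto_atTop]
  intro ε hε
  set ε' := min ε (π / 4) with hε'def
  have hε'pos : 0 < ε' := lt_min hε (by positivity)
  have hε'lt : ε' < π / 2 := lt_of_le_of_lt (min_le_right _ _) (by linarith)
  have hsε' : 0 < Real.sin ε' := Real.sin_pos_of_pos_of_lt_pi hε'pos (by linarith)
  obtain ⟨T₁, hT₁⟩ := Metric.tendsto_atTop.1 hs (Real.sin ε') hsε'
  refine ⟨max T₀ T₁, fun t ht => ?_⟩
  have ht0 : T₀ ≤ t := le_trans (le_max_left _ _) ht
  have ht1 : T₁ ≤ t := le_trans (le_max_right _ _) ht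
  set r := y t - (round (y T₀ / π) : ℝ) * π with hrdef
  have hk := hkconst t ht0
  have hr2 : |r| ≤ π / 2 := by
    have := hround t; rw [hk] at this; exact this
  have hsinr : |Real.sin r| < Real.sin ε' := by
    have := hT₁ t ht1
    rw [Real.dist_eq, sub_zero] at this
    rw [hsinabs t, hk] at this
    exact this
  have habs : |r| < ε' := by
    by_contra hcc
    push_neg at hcc
    have h1 : Real.sin ε' ≤ Real.sin |r| := by
      apply Real.strictMonoOn_sin.monotoneOn ⟨by linarith, by linarith⟩
        ⟨abs_nonneg r |>.trans (le_refl _) |> fun _ => by linarith [abs_nonneg r], hr2⟩ hcc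
    have h2 : Real.sin |r| = |Real.sin r| := by
      rcases abs_cases r with ⟨hh, hh2⟩ | ⟨hh, hh2⟩
      · rw [hh, abs_of_nonneg (Real.sin_nonneg_of_nonneg_of_le_pi hh2 (by linarith))]
      · rw [hh, Real.sin_neg, abs_of_nonpos
          (Real.sin_nonpos_of_nonpos_of_neg_pi_le hh2.le (by linarith))]
    rw [h2] at h1
    linarith
  rw [Real.dist_eq]
  exact lt_of_lt_of_le habs (min_le_left _ _)

/-- damped pendulum: every solution of `y′′ + y′ − 2 sin y = 0` that is
bounded on `(−∞,∞)` has limits at both `±∞`, each an integer multiple of `π`. -/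
theorem stmt15 (y z : ℝ → ℝ)
    (hy : ∀ t : ℝ, HasDerivAt y (z t) t)
    (hz : ∀ t : ℝ, HasDerivAt z (-(z t) + 2 * Real.sin (y t)) t)
    (hbd : ∃ M : ℝ, ∀ t : ℝ, |y t| ≤ M) :
    ∃ Lp Lm : ℝ, Tendsto y atTop (nhds Lp) ∧ Tendsto y atBot (nhds Lm) ∧
      (∃ m : ℤ, Lp = m * π) ∧ (∃ n : ℤ, Lm = n * π) := by
  obtain ⟨M, hM⟩ := hbd
  have hyc : Continuous y := continuous_iff_continuousAt.2 fun t => (hy t).continuousAt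
  have hzc : Continuous z := continuous_iff_continuousAt.2 fun t => (hz t).continuousAt
  have hsyc : Continuous fun t => Real.sin (y t) := Real.continuous_sin.comp hyc
  -- w = y + z is 2-Lipschitz
  have hw : ∀ t, HasDerivAt (fun t => y t + z t) (2 * Real.sin (y t)) t := by
    intro t
    have := (hy t).add (hz t)
    refine this.congr_deriv ?_
    ring
  have hwb : ∀ a b : ℝ, |(y b + z b) - (y a + z a)| ≤ 2 * |b - a| :=
    lipOfDeriv hw (fun x => by
      rw [abs_mul, abs_two]
      nlinarith [Real.abs_sin_le_one (y x), abs_nonneg (Real.sin (y x))])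
  -- z grows at most linearly
  have hzlin : ∀ t : ℝ, |z t| ≤ (M + |y 0 + z 0|) + 2 * |t| := by
    intro t
    have h1 := hwb 0 t
    have h2 := hM t
    have h3 : z t = ((y t + z t) - (y 0 + z 0)) + (y 0 + z 0) + (-(y t)) := by ring
    have h4 := abs_add_three ((y t + z t) - (y 0 + z 0)) (y 0 + z 0) (-(y t))
    rw [← h3, abs_neg] at h4
    have h5 : |t - 0| = |t| := by rw [sub_zero]
    rw [h5] at h1
    linarith
  -- g = exp * z, FTC
  have hg : ∀ t, HasDerivAt (fun t => Real.exp t * z t) (2 * Real.exp t * Real.sin (y t)) t := by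
    intro t
    have := (Real.hasDerivAt_exp t).mul (hz t)
    refine this.congr_deriv ?_
    ring
  have hgftc : ∀ s t : ℝ, Real.exp t * z t - Real.exp s * z s
      = ∫ u in s..t, 2 * Real.exp u * Real.sin (y u) :=
    ftcHelper hg ((continuous_const.mul Real.continuous_exp).mul hsyc)
  -- |z| ≤ 2
  have hz2 : ∀ t : ℝ, |z t| ≤ 2 := by
    intro t
    have key : ∀ s : ℝ, s ≤ t → Real.exp t * |z t| ≤ Real.exp s * |z s| + 2 * Real.exp t := by
      intro s hs
      have h1 := hgftc s t
      have h2 : |∫ u in s..t, 2 * Real.exp u * Real.sin (y u)| ≤ ∫ u in s..t, 2 * Real.exp u := by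
        refine le_trans (intervalIntegral.abs_integral_le_integral_abs hs) ?_
        apply intervalIntegral.integral_mono_on hs
          (((continuous_const.mul Real.continuous_exp).mul hsyc).abs.intervalIntegrable _ _)
          ((continuous_const.mul Real.continuous_exp).intervalIntegrable _ _)
        intro u _
        simp only [Pi.mul_apply]
        rw [abs_mul, abs_mul, abs_two, abs_of_pos (Real.exp_pos u)]
        nlinarith [Real.abs_sin_le_one (y u), Real.exp_pos u, abs_nonneg (Real.sin (y u))]
      have h3 : (∫ u in s..t, 2 * Real.exp u) = 2 * Real.exp t - 2 * Real.exp s := by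
        rw [intervalIntegral.integral_const_mul, integral_exp]
        ring
      have h4 : |Real.exp t * z t| ≤ |Real.exp s * z s| + (2 * Real.exp t - 2 * Real.exp s) := by
        have h5 := abs_sub_abs_le_abs_sub (Real.exp t * z t) (Real.exp s * z s)
        rw [h1] at h5
        rw [h3] at h2
        linarith
      rw [abs_mul, abs_mul, abs_of_pos (Real.exp_pos t), abs_of_pos (Real.exp_pos s)] at h4
      linarith [Real.exp_pos s]
    have hzero : Tendsto (fun s : ℝ => Real.exp s * |z s|) atBot (nhds 0) := by
      have hb : Tendsto (fun s : ℝ => Real.exp s * ((M + |y 0 + z 0|) + 2 * |s|)) atBot (nhds 0) := by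
        have h1 : Tendsto (fun s : ℝ => (M + |y 0 + z 0|) * Real.exp s) atBot
            (nhds ((M + |y 0 + z 0|) * 0)) := tendsto_const_nhds.mul Real.tendsto_exp_atBot
        have h2 : Tendsto (fun s : ℝ => |s| * Real.exp s) atBot (nhds 0) := by
          have h3 := (Real.tendsto_pow_mul_exp_neg_atTop_nhds_zero 1).comp tendsto_neg_atBot_atTop
          apply h3.congr'
          filter_upwards [eventually_le_atBot (0 : ℝ)] with s hs
          simp only [Function.comp_apply, pow_one, neg_neg]
          rw [abs_of_nonpos hs]
        have := h1.add (tendsto_const_nhds.mul h2 : Tendsto (fun s : ℝ => 2 * (|s| * Real.exp s))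
          atBot (nhds (2 * 0)))
        simp only [mul_zero, add_zero, zero_add] at this
        apply this.congr
        intro s
        ring
      exact squeeze_zero (fun s => by positivity)
        (fun s => mul_le_mul_of_nonneg_left (hzlin s) (Real.exp_pos s).le) hb
    have hlim : Tendsto (fun s : ℝ => Real.exp s * |z s| + 2 * Real.exp t) atBot
        (nhds (0 + 2 * Real.exp t)) := hzero.add tendsto_const_nhds
    have hfin : Real.exp t * |z t| ≤ 0 + 2 * Real.exp t :=
      ge_of_tendsto hlim (eventually_atBot.2 ⟨t, key⟩)
    nlinarith [Real.exp_pos t]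
  -- Energy
  set H : ℝ → ℝ := fun t => (z t) ^ 2 / 2 + 2 * Real.cos (y t) with hHdef
  have hH : ∀ t, HasDerivAt H (-(z t) ^ 2) t := by
    intro t
    have h1 : HasDerivAt (fun t => (z t) ^ 2) (2 * z t * (-(z t) + 2 * Real.sin (y t))) t := by
      have := (hz t).pow 2
      refine this.congr_deriv ?_
      push_cast
      ring
    have h2 : HasDerivAt (fun t => Real.cos (y t)) (-Real.sin (y t) * z t) t := (hy t).cos
    have := (h1.div_const 2).add (h2.const_mul 2)
    refine this.congr_deriv ?_
    ring
  have hHc : Continuous H := ((hzc.pow 2).div_const 2).add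
    (continuous_const.mul (Real.continuous_cos.comp hyc))
  have hHanti : Antitone H := by
    apply antitone_of_deriv_nonpos (fun t => (hH t).differentiableAt)
    intro x
    rw [(hH x).deriv]
    nlinarith [sq_nonneg (z x)]
  have hHlb : ∀ t, (-2 : ℝ) ≤ H t := by
    intro t
    rw [hHdef]
    nlinarith [Real.neg_one_le_cos (y t), sq_nonneg (z t)]
  have hHub : ∀ t, H t ≤ 4 := by
    intro t
    rw [hHdef]
    nlinarith [Real.cos_le_one (y t), hz2 t, abs_nonneg (z t), sq_abs (z t)]
  have hHtop : Tendsto H atTop (nhds (⨅ t, H t)) :=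
    tendsto_atTop_ciInf hHanti ⟨-2, by rintro x ⟨t, rfl⟩; exact hHlb t⟩
  have hHbot : Tendsto H atBot (nhds (⨆ t, H t)) :=
    tendsto_atBot_ciSup hHanti ⟨4, by rintro x ⟨t, rfl⟩; exact hHub t⟩
  have hHdiff : ∀ (l : Filter ℝ) (L : ℝ), Tendsto H l (nhds L) →
      (∀ δ : ℝ, Tendsto (fun t : ℝ => t + δ) l l) →
      ∀ δ : ℝ, 0 < δ → Tendsto (fun t => H t - H (t + δ)) l (nhds 0) := by
    intro l L hL hshift δ _
    have := hL.sub (hL.comp (hshift δ))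
    simpa using this
  have hshiftTop : ∀ δ : ℝ, Tendsto (fun t : ℝ => t + δ) atTop atTop :=
    fun δ => tendsto_atTop_add_const_right atTop δ tendsto_id
  have hshiftBot : ∀ δ : ℝ, Tendsto (fun t : ℝ => t + δ) atBot atBot :=
    fun δ => tendsto_atBot_add_const_right atBot δ tendsto_id
  have hHint : ∀ s t : ℝ, s ≤ t → H s - H t = ∫ u in s..t, (z u) ^ 2 := by
    intro s t _
    have h1 := ftcHelper hH ((hzc.pow 2).neg) s t
    rw [intervalIntegral.integral_neg] at h1
    linarith
  have hzlip : ∀ a b : ℝ, |(z b) ^ 2 - (z a) ^ 2| ≤ 16 * |b - a| := by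
    apply lipOfDeriv (f' := fun t => 2 * z t * (-(z t) + 2 * Real.sin (y t)))
    · intro t
      have := (hz t).pow 2
      refine this.congr_deriv ?_
      push_cast
      ring
    · intro x
      have h1 := hz2 x
      have h2 := Real.abs_sin_le_one (y x)
      rw [abs_mul, abs_mul, abs_two]
      have h3 : |(-(z x) + 2 * Real.sin (y x))| ≤ 4 := by
        refine le_trans (abs_add_le _ _) ?_
        rw [abs_neg, abs_mul, abs_two]
        nlinarith [abs_nonneg (Real.sin (y x))]
      nlinarith [abs_nonneg (z x), abs_nonneg (-(z x) + 2 * Real.sin (y x))]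
  have hz0top : Tendsto z atTop (nhds 0) :=
    zsmall z H atTop hzc (hHdiff atTop _ hHtop hshiftTop) hHint hzlip
  have hz0bot : Tendsto z atBot (nhds 0) :=
    zsmall z H atBot hzc (hHdiff atBot _ hHbot hshiftBot) hHint hzlip
  -- FTC for z
  have hzftc : ∀ s t : ℝ, s ≤ t →
      z t - z s = ∫ u in s..t, ((-1) * z u + 2 * Real.sin (y u)) := by
    intro s t _
    exact ftcHelper (fun x => by simpa [neg_one_mul] using hz x)
      ((continuous_const.mul hzc).add (continuous_const.mul hsyc)) s t
  have hsinlip : ∀ a b : ℝ, |Real.sin (y b) - Real.sin (y a)| ≤ 2 * |b - a| := by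
    apply lipOfDeriv (f' := fun t => Real.cos (y t) * z t) (fun t => (hy t).sin)
    intro x
    rw [abs_mul]
    nlinarith [Real.abs_cos_le_one (y x), hz2 x, abs_nonneg (z x), abs_nonneg (Real.cos (y x))]
  have hsintop : Tendsto (fun t => Real.sin (y t)) atTop (nhds 0) :=
    sinsmall (fun t => Real.sin (y t)) z (-1) (by norm_num) hsyc hzc hsinlip hzftc hz0top
  -- reflected system for atBot
  have hZ0 : Tendsto (fun t : ℝ => z (-t)) atTop (nhds 0) := hz0bot.comp tendsto_neg_atTop_atBot
  have hFlip : ∀ a b : ℝ, |(-Real.sin (y (-b))) - (-Real.sin (y (-a)))| ≤ 2 * |b - a| := by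
    intro a b
    have := hsinlip (-b) (-a)
    calc |(-Real.sin (y (-b))) - (-Real.sin (y (-a)))|
        = |Real.sin (y (-a)) - Real.sin (y (-b))| := by congr 1; ring
      _ ≤ 2 * |(-a) - (-b)| := this
      _ = 2 * |b - a| := by rw [show (-a) - (-b) = -(a - b) by ring, abs_neg, abs_sub_comm]
  have hZftc : ∀ s t : ℝ, s ≤ t → z (-t) - z (-s)
      = ∫ u in s..t, (1 * z (-u) + 2 * (-Real.sin (y (-u)))) := by
    intro s t hst
    have h1 := hzftc (-t) (-s) (by linarith)
    have h2 : (∫ u in t..s, ((-1) * z (-u) + 2 * Real.sin (y (-u))))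
        = ∫ u in (-s)..(-t), ((-1) * z u + 2 * Real.sin (y u)) :=
      intervalIntegral.integral_comp_neg (fun u => (-1) * z u + 2 * Real.sin (y u))
    have h3 : (∫ u in s..t, (1 * z (-u) + 2 * (-Real.sin (y (-u)))))
        = - ∫ u in s..t, ((-1) * z (-u) + 2 * Real.sin (y (-u))) := by
      rw [← intervalIntegral.integral_neg]
      apply intervalIntegral.integral_congr
      intro u _
      ring
    have h4 : (∫ u in s..t, ((-1) * z (-u) + 2 * Real.sin (y (-u))))
        = - ∫ u in t..s, ((-1) * z (-u) + 2 * Real.sin (y (-u))) :=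
      intervalIntegral.integral_symm t s
    rw [h3, h4, neg_neg, h2, intervalIntegral.integral_symm, ← h1]
    ring
  have hFtop : Tendsto (fun t : ℝ => -Real.sin (y (-t))) atTop (nhds 0) :=
    sinsmall (fun t => -Real.sin (y (-t))) (fun t => z (-t)) 1 (by norm_num)
      (hsyc.comp continuous_neg).neg (hzc.comp continuous_neg) hFlip hZftc hZ0
  have hsinbot : Tendsto (fun t => Real.sin (y t)) atBot (nhds 0) := by
    have h1 : Tendsto (fun t : ℝ => Real.sin (y (-t))) atTop (nhds 0) := by
      simpa using hFtop.neg
    have h2 := h1.comp tendsto_neg_atBot_atTop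
    apply h2.congr
    intro t
    simp [Function.comp]
  -- conclude
  obtain ⟨kp, hkp⟩ := limMultiple y hyc hsintop
  obtain ⟨km, hkm'⟩ := limMultiple (fun t => y (-t)) (hyc.comp continuous_neg)
    (hsinbot.comp tendsto_neg_atTop_atBot)
  have hkm : Tendsto y atBot (nhds ((km : ℝ) * π)) := by
    have := hkm'.comp tendsto_neg_atBot_atTop
    apply this.congr
    intro t
    simp [Function.comp]
  exact ⟨(kp : ℝ) * π, (km : ℝ) * π, hkp, hkm, ⟨kp, rfl⟩, ⟨km, rfl⟩⟩
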